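/- Let T ≥ 0, V ≥ 0 and m ∈ [0,1], and let g: [0, T] → ℝ be a differentiable function with g(0) ≥ 0 whose derivative satisfies g′(t) ≥ (m + (1 − m)e^{−t})·V − g(t) for every t ∈ [0, T]. Then g(T) ≥ [m·(1 − e^{−T}) + (1 − m)·T·e^{−T}]·V. -/

import Mathlib

/-- if `g` is differentiable on `[0, T]` with `g(0) ≥ 0` and
`g′(t) ≥ (m + (1 − m)e^{−t})·V − g(t)` there, then
`g(T) ≥ [m(1 − e^{−T}) + (1 − m)·T·e^{−T}]·V`. -/
theorem stmt11 (T V m : ℝ) (hT : 0 ≤ T) (hV : 0 ≤ V) (hm : m ∈ Set.Icc (0 : ℝ) 1)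
    (g : ℝ → ℝ) (hg0 : 0 ≤ g 0)
    (hdiff : ∀ t ∈ Set.Icc (0 : ℝ) T, DifferentiableAt ℝ g t)
    (hge : ∀ t ∈ Set.Icc (0 : ℝ) T, (m + (1 - m) * Real.exp (-t)) * V - g t ≤ deriv g t) :
    (m * (1 - Real.exp (-T)) + (1 - m) * T * Real.exp (-T)) * V ≤ g T := by
  set ψ : ℝ → ℝ := fun t => Real.exp t * g t - V * (m * Real.exp t + (1 - m) * t) with hψ
  have hderiv : ∀ x ∈ Set.Icc (0:ℝ) T, HasDerivAt ψ
      (Real.exp x * g x + Real.exp x * deriv g x - V * (m * Real.exp x + (1 - m))) x := by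
    intro x hx
    have h1 : HasDerivAt (fun t => Real.exp t * g t)
        (Real.exp x * g x + Real.exp x * deriv g x) x := by
      have := (Real.hasDerivAt_exp x).mul ((hdiff x hx).hasDerivAt)
      exact this.congr_deriv (by ring)
    have h2 : HasDerivAt (fun t => V * (m * Real.exp t + (1 - m) * t))
        (V * (m * Real.exp x + (1 - m))) x := by
      have := (((Real.hasDerivAt_exp x).const_mul m).add
        ((hasDerivAt_id x).const_mul (1 - m))).const_mul V
      simpa [mul_comm, mul_one] using this
    exact h1.sub h2
  have hcont : ContinuousOn ψ (Set.Icc 0 T) := fun x hx =>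
    (hderiv x hx).continuousAt.continuousWithinAt
  have hmono : MonotoneOn ψ (Set.Icc 0 T) := by
    apply monotoneOn_of_deriv_nonneg (convex_Icc 0 T) hcont
    · intro x hx
      have hx' : x ∈ Set.Icc (0:ℝ) T := interior_subset hx
      exact (hderiv x hx').differentiableAt.differentiableWithinAt
    · intro x hx
      have hx' : x ∈ Set.Icc (0:ℝ) T := interior_subset hx
      rw [(hderiv x hx').deriv]
      have hge' := hge x hx'
      have hexp : (0:ℝ) < Real.exp x := Real.exp_pos x
      have h := mul_le_mul_of_nonneg_left hge' hexp.le
      have heq : Real.exp x * ((m + (1 - m) * Real.exp (-x)) * V - g x)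
          = (m * Real.exp x + (1 - m)) * V - Real.exp x * g x := by
        rw [Real.exp_neg]; field_simp
      rw [heq] at h
      linarith
  have hTmem : T ∈ Set.Icc (0:ℝ) T := ⟨hT, le_refl T⟩
  have h0mem : (0:ℝ) ∈ Set.Icc (0:ℝ) T := ⟨le_refl 0, hT⟩
  have key := hmono h0mem hTmem hT
  have hψ0 : ψ 0 = g 0 - V * m := by simp [hψ]
  have hψT : ψ T = Real.exp T * g T - V * (m * Real.exp T + (1 - m) * T) := rfl
  rw [hψ0, hψT] at key
  have hexpT : (0:ℝ) < Real.exp T := Real.exp_pos T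
  have hL : (m * (1 - Real.exp (-T)) + (1 - m) * T * Real.exp (-T)) * V * Real.exp T
      = (m * (Real.exp T - 1) + (1 - m) * T) * V := by
    rw [Real.exp_neg]; field_simp
  refine le_of_mul_le_mul_right ?_ hexpT
  rw [hL]
  nlinarith [key, hg0]
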